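/- Let D be a coassociative counital coalgebra over a field k. For any right D-comodule N and any finitely copresented right D-comodule L, the functor N ↦ N* = Hom_k(N,k) and the forgetful functor from left D-contramodules to left D*-modules induce isomorphisms of Hom spaces Hom_{D^op}(N, L) ≅ Hom^D(L*, N*) ≅ Hom_{D*}(L*, N*), where the three Hom spaces are taken in the categories of right D-comodules, left D-contramodules, and left D*-modules, respectively. -/

import Mathlib

open TensorProduct LinearMap

section Contra

variable (k : Type) [Field k]
variable (D : Type) [AddCommGroup D] [Module k D] [Coalgebra k D]

/-- Axioms for a left `D`-contramodule structure given by a contraaction map `π`. -/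
structure IsContra {P : Type} [AddCommGroup P] [Module k P]
    (π : (D →ₗ[k] P) →ₗ[k] P) : Prop where
  contraassoc : ∀ f : D ⊗[k] D →ₗ[k] P,
    π (f ∘ₗ CoalgebraStruct.comul (R := k) (A := D)) = π (π ∘ₗ TensorProduct.curry f)
  contraunit : ∀ p : P,
    π ((CoalgebraStruct.counit (R := k) (A := D)).smulRight p) = p

/-- A `k`-linear map between contramodules is a contramodule morphism. -/
def IsContraHom {P Q : Type} [AddCommGroup P] [Module k P] [AddCommGroup Q] [Module k Q]
    (πP : (D →ₗ[k] P) →ₗ[k] P) (πQ : (D →ₗ[k] Q) →ₗ[k] Q) (f : P →ₗ[k] Q) : Prop :=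
  ∀ g : D →ₗ[k] P, f (πP g) = πQ (f ∘ₗ g)

/-- The contraaction of the free left contramodule `Hom_k(D, V)`. -/
noncomputable def freeContraaction (V : Type) [AddCommGroup V] [Module k V] :
    (D →ₗ[k] (D →ₗ[k] V)) →ₗ[k] (D →ₗ[k] V) :=
  (LinearMap.lcomp k V (CoalgebraStruct.comul (R := k) (A := D))) ∘ₗ
    TensorProduct.uncurry (RingHom.id k) D D V

/-- A contramodule is finitely generated if it is a quotient of a free contramodule
with a finite-dimensional space of generators. -/
def FinGenContra {P : Type} [AddCommGroup P] [Module k P]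
    (π : (D →ₗ[k] P) →ₗ[k] P) : Prop :=
  ∃ (V : Type) (_ : AddCommGroup V) (_ : Module k V), FiniteDimensional k V ∧
    ∃ g : (D →ₗ[k] V) →ₗ[k] P, Function.Surjective g ∧
      IsContraHom k D (freeContraaction k D V) π g

end Contra

open TensorProduct LinearMap

section RightComod

variable (k : Type) [Field k]
variable (D : Type) [AddCommGroup D] [Module k D] [Coalgebra k D]

/-- Axioms for a right `D`-comodule structure given by a coaction map `ρ`. -/
structure IsRightComod {N : Type} [AddCommGroup N] [Module k N]
    (ρ : N →ₗ[k] N ⊗[k] D) : Prop where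
  coassoc : ∀ n : N, (TensorProduct.assoc k N D D) (ρ.rTensor D (ρ n)) =
      (CoalgebraStruct.comul (R := k) (A := D)).lTensor N (ρ n)
  counit : ∀ n : N, (TensorProduct.rid k N)
      ((CoalgebraStruct.counit (R := k) (A := D)).lTensor N (ρ n)) = n

/-- Morphisms of right `D`-comodules. -/
def IsRightComodHom {N N' : Type} [AddCommGroup N] [Module k N]
    [AddCommGroup N'] [Module k N']
    (ρN : N →ₗ[k] N ⊗[k] D) (ρN' : N' →ₗ[k] N' ⊗[k] D) (f : N →ₗ[k] N') : Prop :=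
  f.rTensor D ∘ₗ ρN = ρN' ∘ₗ f

/-- The coaction of the cofree right comodule `V ⊗ D`. -/
noncomputable def cofreeRightCoaction (V : Type) [AddCommGroup V] [Module k V] :
    V ⊗[k] D →ₗ[k] (V ⊗[k] D) ⊗[k] D :=
  (TensorProduct.assoc k V D D).symm.toLinearMap ∘ₗ
    (CoalgebraStruct.comul (R := k) (A := D)).lTensor V

/-- A right comodule is finitely cogenerated if it admits an injective comodule
morphism into a cofree right comodule with finite-dimensional cogenerators. -/
def FinCogenRight {N : Type} [AddCommGroup N] [Module k N]
    (ρ : N →ₗ[k] N ⊗[k] D) : Prop :=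
  ∃ (V : Type) (_ : AddCommGroup V) (_ : Module k V), FiniteDimensional k V ∧
    ∃ f : N →ₗ[k] V ⊗[k] D, Function.Injective f ∧
      IsRightComodHom k D ρ (cofreeRightCoaction k D V) f

/-- A right comodule is finitely copresented if it is (isomorphic to) the kernel of a
morphism of finitely cogenerated cofree right comodules. -/
def FinCopresRight {N : Type} [AddCommGroup N] [Module k N]
    (ρ : N →ₗ[k] N ⊗[k] D) : Prop :=
  ∃ (V : Type) (_ : AddCommGroup V) (_ : Module k V)
    (W : Type) (_ : AddCommGroup W) (_ : Module k W),
    FiniteDimensional k V ∧ FiniteDimensional k W ∧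
    ∃ g : V ⊗[k] D →ₗ[k] W ⊗[k] D,
      IsRightComodHom k D (cofreeRightCoaction k D V) (cofreeRightCoaction k D W) g ∧
      ∃ e : N →ₗ[k] V ⊗[k] D, Function.Injective e ∧
        IsRightComodHom k D ρ (cofreeRightCoaction k D V) e ∧
        LinearMap.range e = LinearMap.ker g

/-- The canonical left `D`-contraaction on the dual vector space `N* = Hom_k(N, k)`
of a right `D`-comodule `N`. -/
noncomputable def dualContraaction {N : Type} [AddCommGroup N] [Module k N]
    (ρ : N →ₗ[k] N ⊗[k] D) :
    (D →ₗ[k] (N →ₗ[k] k)) →ₗ[k] (N →ₗ[k] k) :=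
  (LinearMap.lcomp k k ρ) ∘ₗ (TensorProduct.uncurry (RingHom.id k) N D k) ∘ₗ (LinearMap.lflip).toLinearMap

/-- The dualization map on morphisms, `φ ↦ φ* = Hom_k(φ, k)`. -/
noncomputable def dualizationMap {N N' : Type} [AddCommGroup N] [Module k N]
    [AddCommGroup N'] [Module k N'] (φ : N →ₗ[k] N') :
    (N' →ₗ[k] k) →ₗ[k] (N →ₗ[k] k) :=
  LinearMap.lcomp k k φ

end RightComod

open TensorProduct LinearMap

section DAct

variable (k : Type) [Field k]
variable (D : Type) [AddCommGroup D] [Module k D] [Coalgebra k D]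

/-- The underlying left `D* = Hom_k(D,k)`-module structure of a left `D`-contramodule:
the action of a linear functional `f : D → k` on `p` is `π(d ↦ f(d)·p)`. -/
noncomputable def dAction {P : Type} [AddCommGroup P] [Module k P]
    (π : (D →ₗ[k] P) →ₗ[k] P) (f : D →ₗ[k] k) (p : P) : P :=
  π (f.smulRight p)

end DAct

section AuxLemmas

open TensorProduct LinearMap

set_option linter.unusedSectionVars false

variable (k : Type) [Field k]
variable (D : Type) [AddCommGroup D] [Module k D] [Coalgebra k D]

/-- The embedding `V* → (V ⊗ D)*`, `v* ↦ v* ⊗ ε`. -/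
noncomputable def iotaEps (V : Type) [AddCommGroup V] [Module k V] :
    (V →ₗ[k] k) →ₗ[k] (V ⊗[k] D →ₗ[k] k) :=
  (TensorProduct.dualDistrib k V D) ∘ₗ
    ((TensorProduct.mk k (V →ₗ[k] k) (D →ₗ[k] k)).flip
      (CoalgebraStruct.counit (R := k) (A := D)))

lemma iotaEps_apply {V : Type} [AddCommGroup V] [Module k V] (v' : V →ₗ[k] k)
    (v : V) (d : D) :
    iotaEps k D V v' (v ⊗ₜ[k] d) = v' v * CoalgebraStruct.counit (R := k) (A := D) d := by
  simp [iotaEps]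

lemma comp_smulRight {P Q : Type} [AddCommGroup P] [Module k P] [AddCommGroup Q] [Module k Q]
    (T : P →ₗ[k] Q) (f : D →ₗ[k] k) (p : P) :
    T ∘ₗ f.smulRight p = f.smulRight (T p) := by
  ext d; simp

lemma dualContraaction_apply {N : Type} [AddCommGroup N] [Module k N]
    (ρ : N →ₗ[k] N ⊗[k] D) (g : D →ₗ[k] (N →ₗ[k] k)) (n : N) :
    dualContraaction k D ρ g n = TensorProduct.uncurry (RingHom.id k) N D k g.flip (ρ n) := rfl

/-- Part (1): the dual of a comodule morphism is a contramodule morphism. -/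
theorem dual_is_contraHom {N L : Type} [AddCommGroup N] [Module k N]
    [AddCommGroup L] [Module k L] (ρN : N →ₗ[k] N ⊗[k] D) (ρL : L →ₗ[k] L ⊗[k] D)
    (φ : N →ₗ[k] L) (hφ : IsRightComodHom k D ρN ρL φ) :
    IsContraHom k D (dualContraaction k D ρL) (dualContraaction k D ρN)
      (dualizationMap k φ) := by
  intro g
  ext n
  have h1 : ρL (φ n) = φ.rTensor D (ρN n) := (LinearMap.congr_fun hφ n).symm
  have h2 : TensorProduct.uncurry (RingHom.id k) N D k ((dualizationMap k φ ∘ₗ g)).flip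
      = TensorProduct.uncurry (RingHom.id k) L D k g.flip ∘ₗ φ.rTensor D := by
    apply TensorProduct.ext'
    intro n₀ d
    simp [dualizationMap]
  calc dualizationMap k φ (dualContraaction k D ρL g) n
      = TensorProduct.uncurry (RingHom.id k) L D k g.flip (ρL (φ n)) := rfl
    _ = TensorProduct.uncurry (RingHom.id k) L D k g.flip (φ.rTensor D (ρN n)) := by rw [h1]
    _ = TensorProduct.uncurry (RingHom.id k) N D k ((dualizationMap k φ ∘ₗ g)).flip (ρN n) := by
        rw [h2]; rfl
    _ = dualContraaction k D ρN (dualizationMap k φ ∘ₗ g) n := rfl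

end AuxLemmas
section AuxLemmas2

open TensorProduct LinearMap

set_option linter.unusedSectionVars false

variable (k : Type) [Field k]
variable (D : Type) [AddCommGroup D] [Module k D] [Coalgebra k D]

/-- For any linear map `f : N → V`, `(f ⊗ 1) ∘ ρN` is a comodule morphism into the
cofree comodule. -/
theorem comodHom_of_linear {N V : Type} [AddCommGroup N] [Module k N]
    [AddCommGroup V] [Module k V] (ρN : N →ₗ[k] N ⊗[k] D) (hN : IsRightComod k D ρN)
    (f : N →ₗ[k] V) :
    IsRightComodHom k D ρN (cofreeRightCoaction k D V) (f.rTensor D ∘ₗ ρN) := by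
  have nat1 : ((f.rTensor D).rTensor D) ∘ₗ (TensorProduct.assoc k N D D).symm.toLinearMap
      = (TensorProduct.assoc k V D D).symm.toLinearMap ∘ₗ f.rTensor (D ⊗[k] D) := by
    ext n d₁ d₂; simp
  have nat2 : f.rTensor (D ⊗[k] D) ∘ₗ
        (CoalgebraStruct.comul (R := k) (A := D)).lTensor N
      = (CoalgebraStruct.comul (R := k) (A := D)).lTensor V ∘ₗ f.rTensor D := by
    apply TensorProduct.ext'
    intro n d; simp
  apply LinearMap.ext
  intro n
  have hco := hN.coassoc n
  have h3 : ρN.rTensor D (ρN n)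
      = (TensorProduct.assoc k N D D).symm
          ((CoalgebraStruct.comul (R := k) (A := D)).lTensor N (ρN n)) := by
    rw [← hco]; simp
  calc ((f.rTensor D ∘ₗ ρN).rTensor D ∘ₗ ρN) n
      = (f.rTensor D).rTensor D (ρN.rTensor D (ρN n)) := by
        rw [LinearMap.comp_apply, LinearMap.rTensor_comp, LinearMap.comp_apply]
    _ = ((f.rTensor D).rTensor D ∘ₗ (TensorProduct.assoc k N D D).symm.toLinearMap)
          ((CoalgebraStruct.comul (R := k) (A := D)).lTensor N (ρN n)) := by
        rw [h3]; rfl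
    _ = (TensorProduct.assoc k V D D).symm
          ((f.rTensor (D ⊗[k] D)) ((CoalgebraStruct.comul (R := k) (A := D)).lTensor N (ρN n))) := by
        rw [nat1]; rfl
    _ = (TensorProduct.assoc k V D D).symm
          ((CoalgebraStruct.comul (R := k) (A := D)).lTensor V (f.rTensor D (ρN n))) := by
        rw [← LinearMap.comp_apply, nat2]; rfl
    _ = (cofreeRightCoaction k D V ∘ₗ (f.rTensor D ∘ₗ ρN)) n := rfl

/-- The `ε`-corestriction map `V ⊗ D → V`. -/
noncomputable def epsCorestrict (V : Type) [AddCommGroup V] [Module k V] :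
    V ⊗[k] D →ₗ[k] V :=
  (TensorProduct.rid k V).toLinearMap ∘ₗ
    (CoalgebraStruct.counit (R := k) (A := D)).lTensor V

lemma iotaEps_eq_comp {V : Type} [AddCommGroup V] [Module k V] (v' : V →ₗ[k] k) :
    iotaEps k D V v' = v' ∘ₗ epsCorestrict k D V := by
  apply TensorProduct.ext'
  intro v d
  simp [iotaEps, epsCorestrict, mul_comm]

/-- The counit property of the cofree coaction. -/
lemma epsCorestrict_cofree (V : Type) [AddCommGroup V] [Module k V] (x : V ⊗[k] D) :
    (epsCorestrict k D V).rTensor D (cofreeRightCoaction k D V x) = x := by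
  induction x with
  | zero => simp
  | add a b ha hb => simp [map_add, ha, hb]
  | tmul v d =>
    have hG : ((epsCorestrict k D V).rTensor D) ∘ₗ
          (TensorProduct.assoc k V D D).symm.toLinearMap ∘ₗ
          (TensorProduct.mk k V (D ⊗[k] D) v)
        = ((LinearMap.toSpanSingleton k V v).rTensor D) ∘ₗ
          ((CoalgebraStruct.counit (R := k) (A := D)).rTensor D) := by
      apply TensorProduct.ext'
      intro d₁ d₂
      simp [epsCorestrict, mul_comm, TensorProduct.smul_tmul']
    have h1 : cofreeRightCoaction k D V (v ⊗ₜ[k] d)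
        = (TensorProduct.assoc k V D D).symm
            (v ⊗ₜ[k] (CoalgebraStruct.comul (R := k) (A := D) d)) := by
      simp [cofreeRightCoaction]
    rw [h1]
    have := LinearMap.congr_fun hG (CoalgebraStruct.comul (R := k) (A := D) d)
    simp only [LinearMap.comp_apply, TensorProduct.mk_apply, LinearEquiv.coe_coe] at this
    rw [this]
    have hc : (CoalgebraStruct.counit (R := k) (A := D)).rTensor D
        (CoalgebraStruct.comul (R := k) (A := D) d) = (1 : k) ⊗ₜ[k] d :=
      Coalgebra.rTensor_counit_comul d
    rw [hc]
    simp

/-- A comodule morphism into a cofree comodule is recovered from its `ε`-corestriction. -/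
theorem comodHom_into_cofree_eq {N V : Type} [AddCommGroup N] [Module k N]
    [AddCommGroup V] [Module k V] (ρN : N →ₗ[k] N ⊗[k] D) (χ : N →ₗ[k] V ⊗[k] D)
    (hχ : IsRightComodHom k D ρN (cofreeRightCoaction k D V) χ) :
    χ = ((epsCorestrict k D V ∘ₗ χ).rTensor D) ∘ₗ ρN := by
  apply LinearMap.ext
  intro n
  have h1 : χ.rTensor D (ρN n) = cofreeRightCoaction k D V (χ n) := LinearMap.congr_fun hχ n
  calc χ n = (epsCorestrict k D V).rTensor D (cofreeRightCoaction k D V (χ n)) :=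
      (epsCorestrict_cofree k D V (χ n)).symm
    _ = (epsCorestrict k D V).rTensor D (χ.rTensor D (ρN n)) := by rw [h1]
    _ = ((epsCorestrict k D V ∘ₗ χ).rTensor D ∘ₗ ρN) n := by
        rw [LinearMap.rTensor_comp]; rfl

end AuxLemmas2

section CH
open TensorProduct LinearMap
set_option linter.unusedSectionVars false
variable (k : Type) [Field k]
variable (D : Type) [AddCommGroup D] [Module k D] [Coalgebra k D]

lemma comodHom_apply {N N' : Type} [AddCommGroup N] [Module k N]
    [AddCommGroup N'] [Module k N'] {ρ : N →ₗ[k] N ⊗[k] D} {ρ' : N' →ₗ[k] N' ⊗[k] D}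
    {φ : N →ₗ[k] N'} (hφ : IsRightComodHom k D ρ ρ' φ) (n : N) :
    φ.rTensor D (ρ n) = ρ' (φ n) := by
  simpa using LinearMap.congr_fun hφ n

end CH
section AuxLemmas3

open TensorProduct LinearMap

set_option linter.unusedSectionVars false

variable (k : Type) [Field k]
variable (D : Type) [AddCommGroup D] [Module k D] [Coalgebra k D]

/-- Reconstruction: every functional on a cofree comodule is recovered by the
contraaction from its curried family of functionals on `V`. -/
theorem free_reconstruction {V : Type} [AddCommGroup V] [Module k V]
    (ξ : V ⊗[k] D →ₗ[k] k) :
    dualContraaction k D (cofreeRightCoaction k D V)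
      (iotaEps k D V ∘ₗ (TensorProduct.curry ξ).flip) = ξ := by
  apply TensorProduct.ext'
  intro v d
  have hG : TensorProduct.uncurry (RingHom.id k) (V ⊗[k] D) D k
        ((iotaEps k D V ∘ₗ (TensorProduct.curry ξ).flip).flip) ∘ₗ
        (TensorProduct.assoc k V D D).symm.toLinearMap ∘ₗ
        (TensorProduct.mk k V (D ⊗[k] D) v)
      = (TensorProduct.curry ξ v) ∘ₗ (TensorProduct.lid k D).toLinearMap ∘ₗ
        ((CoalgebraStruct.counit (R := k) (A := D)).rTensor D) := by
    apply TensorProduct.ext'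
    intro d₁ d₂
    simp [iotaEps, mul_comm]
  have h1 : cofreeRightCoaction k D V (v ⊗ₜ[k] d)
      = (TensorProduct.assoc k V D D).symm
          (v ⊗ₜ[k] (CoalgebraStruct.comul (R := k) (A := D) d)) := by
    simp [cofreeRightCoaction]
  rw [dualContraaction_apply, h1]
  have h2 := LinearMap.congr_fun hG (CoalgebraStruct.comul (R := k) (A := D) d)
  simp only [LinearMap.comp_apply, TensorProduct.mk_apply, LinearEquiv.coe_coe] at h2
  rw [h2, Coalgebra.rTensor_counit_comul]
  simp

/-- Decomposition of `T ∘ₗ h` for `h : D →ₗ V'` with `V'` finite-dimensional, as a finite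
sum of `smulRight` maps. -/
theorem comp_decompose {V' P : Type} [AddCommGroup V'] [Module k V']
    [AddCommGroup P] [Module k P] [FiniteDimensional k V']
    (b : Module.Basis (Fin (Module.finrank k V')) k V') (h : D →ₗ[k] V') (T : V' →ₗ[k] P) :
    T ∘ₗ h = ∑ i, ((b.coord i ∘ₗ h).smulRight (T (b i))) := by
  ext d
  simp only [LinearMap.comp_apply, LinearMap.sum_apply, LinearMap.smulRight_apply,
    Module.Basis.coord_apply]
  calc T (h d) = T (∑ i, b.repr (h d) i • b i) := by rw [b.sum_repr (h d)]
    _ = ∑ i, b.repr (h d) i • T (b i) := by rw [map_sum]; simp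

end AuxLemmas3
section MainLemma

open TensorProduct LinearMap

set_option linter.unusedSectionVars false
set_option maxHeartbeats 1000000

variable (k : Type) [Field k]
variable (D : Type) [AddCommGroup D] [Module k D] [Coalgebra k D]

theorem dualizationMap_inj {N L : Type} [AddCommGroup N] [Module k N]
    [AddCommGroup L] [Module k L] {φ₁ φ₂ : N →ₗ[k] L}
    (h : dualizationMap k φ₁ = dualizationMap k φ₂) : φ₁ = φ₂ := by
  ext n
  rw [← sub_eq_zero, ← Module.forall_dual_apply_eq_zero_iff k]
  intro η
  have h2 := LinearMap.congr_fun (LinearMap.congr_fun h η) n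
  simp only [dualizationMap, lcomp_apply] at h2
  simp [map_sub, h2]

theorem contraHom_dAction {P Q : Type} [AddCommGroup P] [Module k P]
    [AddCommGroup Q] [Module k Q]
    (πP : (D →ₗ[k] P) →ₗ[k] P) (πQ : (D →ₗ[k] Q) →ₗ[k] Q)
    (ψ : P →ₗ[k] Q) (hψ : IsContraHom k D πP πQ ψ) (f : D →ₗ[k] k) (p : P) :
    ψ (dAction k D πP f p) = dAction k D πQ f (ψ p) := by
  have h := hψ (f.smulRight p)
  rw [comp_smulRight] at h
  exact h

theorem exists_dual_preimage
    {N : Type} [AddCommGroup N] [Module k N]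
    (ρN : N →ₗ[k] N ⊗[k] D) (hN : IsRightComod k D ρN)
    {L : Type} [AddCommGroup L] [Module k L]
    (ρL : L →ₗ[k] L ⊗[k] D)
    (hLcp : FinCopresRight k D ρL)
    (ψ : (L →ₗ[k] k) →ₗ[k] (N →ₗ[k] k))
    (Hd : ∀ (f : D →ₗ[k] k) (p : L →ₗ[k] k),
      ψ (dAction k D (dualContraaction k D ρL) f p) =
        dAction k D (dualContraaction k D ρN) f (ψ p)) :
    ∃ φ : N →ₗ[k] L, IsRightComodHom k D ρN ρL φ ∧ dualizationMap k φ = ψ := by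
  obtain ⟨V, iV1, iV2, W, iW1, iW2, hV, hW, g, hgHom, e, he, heHom, hrange⟩ := hLcp
  haveI : FiniteDimensional k V := hV
  haveI : FiniteDimensional k W := hW
  set a : (V →ₗ[k] k) →ₗ[k] (N →ₗ[k] k) :=
    ψ ∘ₗ dualizationMap k e ∘ₗ iotaEps k D V with ha
  set f : N →ₗ[k] V := (Module.evalEquiv k V).symm.toLinearMap ∘ₗ a.flip with hfdef
  have hf : ∀ (v' : V →ₗ[k] k) (n : N), v' (f n) = a v' n := by
    intro v' n
    calc v' (f n) = v' ((Module.evalEquiv k V).symm (a.flip n)) := rfl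
      _ = a.flip n v' := Module.apply_evalEquiv_symm_apply k V v' (a.flip n)
      _ = a v' n := rfl
  set φ₀ : N →ₗ[k] V ⊗[k] D := f.rTensor D ∘ₗ ρN with hφ₀def
  have hφ₀ : IsRightComodHom k D ρN (cofreeRightCoaction k D V) φ₀ :=
    comodHom_of_linear k D ρN hN f
  -- the key computation
  have key : ∀ ξ : V ⊗[k] D →ₗ[k] k, ξ ∘ₗ φ₀ = ψ (ξ ∘ₗ e) := by
    intro ξ
    set c : D →ₗ[k] (V →ₗ[k] k) := (TensorProduct.curry ξ).flip with hc
    set b := Module.finBasis k (V →ₗ[k] k) with hb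
    have hrec := free_reconstruction k D ξ
    have he' := dual_is_contraHom k D ρL (cofreeRightCoaction k D V) e heHom
      (iotaEps k D V ∘ₗ c)
    have h1 : ξ ∘ₗ e
        = dualContraaction k D ρL (dualizationMap k e ∘ₗ (iotaEps k D V ∘ₗ c)) := by
      rw [← he', hrec]; rfl
    have hd1 : dualizationMap k e ∘ₗ (iotaEps k D V ∘ₗ c)
        = ∑ i, ((b.coord i ∘ₗ c).smulRight
            ((dualizationMap k e ∘ₗ iotaEps k D V) (b i))) := by
      rw [← LinearMap.comp_assoc]
      exact comp_decompose k D b c (dualizationMap k e ∘ₗ iotaEps k D V)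
    have hd2 : a ∘ₗ c = ∑ i, ((b.coord i ∘ₗ c).smulRight (a (b i))) :=
      comp_decompose k D b c a
    have h2 : ψ (ξ ∘ₗ e) = dualContraaction k D ρN (a ∘ₗ c) := by
      rw [h1, hd1, map_sum, map_sum, hd2, map_sum]
      apply Finset.sum_congr rfl
      intro i _
      have := Hd (b.coord i ∘ₗ c) ((dualizationMap k e ∘ₗ iotaEps k D V) (b i))
      simp only [dAction] at this
      rw [this]
      rfl
    have h3 : dualContraaction k D ρN (a ∘ₗ c) = ξ ∘ₗ φ₀ := by
      apply LinearMap.ext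
      intro n
      rw [dualContraaction_apply]
      have h4 : TensorProduct.uncurry (RingHom.id k) N D k ((a ∘ₗ c).flip) = ξ ∘ₗ f.rTensor D := by
        apply TensorProduct.ext'
        intro n₀ d
        have h5 : (a ∘ₗ c).flip n₀ d = a (c d) n₀ := rfl
        calc TensorProduct.uncurry (RingHom.id k) N D k ((a ∘ₗ c).flip) (n₀ ⊗ₜ[k] d)
            = a (c d) n₀ := by rw [TensorProduct.uncurry_apply]; exact h5
          _ = c d (f n₀) := (hf (c d) n₀).symm
          _ = ξ (f n₀ ⊗ₜ[k] d) := rfl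
          _ = (ξ ∘ₗ f.rTensor D) (n₀ ⊗ₜ[k] d) := by simp
      rw [h4]
      rfl
    rw [h2, h3]
  -- g ∘ φ₀ = 0
  have hge : g ∘ₗ e = 0 := by
    apply LinearMap.ext
    intro x
    have hx : e x ∈ LinearMap.ker g := hrange ▸ LinearMap.mem_range_self e x
    simpa using hx
  have hgφ₀ : g ∘ₗ φ₀ = 0 := by
    have hcomp : IsRightComodHom k D ρN (cofreeRightCoaction k D W) (g ∘ₗ φ₀) := by
      apply LinearMap.ext
      intro n
      calc (g ∘ₗ φ₀).rTensor D (ρN n) = g.rTensor D (φ₀.rTensor D (ρN n)) := by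
            rw [LinearMap.rTensor_comp]; rfl
        _ = g.rTensor D (cofreeRightCoaction k D V (φ₀ n)) := by
            rw [comodHom_apply k D hφ₀ n]
        _ = cofreeRightCoaction k D W (g (φ₀ n)) := comodHom_apply k D hgHom (φ₀ n)
        _ = (cofreeRightCoaction k D W ∘ₗ (g ∘ₗ φ₀)) n := rfl
    have hdet := comodHom_into_cofree_eq k D ρN (g ∘ₗ φ₀) hcomp
    have hf' : epsCorestrict k D W ∘ₗ (g ∘ₗ φ₀) = 0 := by
      apply LinearMap.ext
      intro n
      show epsCorestrict k D W (g (φ₀ n)) = 0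
      rw [← Module.forall_dual_apply_eq_zero_iff k]
      intro w'
      have h6 : w' (epsCorestrict k D W (g (φ₀ n)))
          = ((iotaEps k D W w' ∘ₗ g) ∘ₗ φ₀) n := by
        rw [iotaEps_eq_comp]; rfl
      have h7 : (iotaEps k D W w' ∘ₗ g) ∘ₗ e = 0 := by
        rw [LinearMap.comp_assoc, hge, LinearMap.comp_zero]
      rw [h6, key (iotaEps k D W w' ∘ₗ g), h7, map_zero]
      rfl
    rw [hdet, hf']
    simp
  have hmem : ∀ n, φ₀ n ∈ LinearMap.range e := by
    intro n
    rw [hrange, LinearMap.mem_ker]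
    simpa using LinearMap.congr_fun hgφ₀ n
  set E := LinearEquiv.ofInjective e he with hE
  obtain ⟨φ, hφdef⟩ : ∃ φ : N →ₗ[k] L,
      φ = E.symm.toLinearMap ∘ₗ (φ₀.codRestrict (LinearMap.range e) hmem) := ⟨_, rfl⟩
  have heφ' : e ∘ₗ φ = φ₀ := by
    apply LinearMap.ext
    intro n
    rw [hφdef]
    show e (E.symm (φ₀.codRestrict (LinearMap.range e) hmem n)) = φ₀ n
    have h9 : (↑(E (E.symm (φ₀.codRestrict (LinearMap.range e) hmem n))) : V ⊗[k] D)
        = e (E.symm (φ₀.codRestrict (LinearMap.range e) hmem n)) :=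
      LinearEquiv.ofInjective_apply e _
    rw [← h9, E.apply_symm_apply]
    rfl
  have heφ : ∀ n, e (φ n) = φ₀ n := fun n => by
    simpa using LinearMap.congr_fun heφ' n
  have hφHom : IsRightComodHom k D ρN ρL φ := by
    have hinj : Function.Injective (e.rTensor D) :=
      Module.Flat.rTensor_preserves_injective_linearMap e he
    apply LinearMap.ext
    intro n
    apply hinj
    calc e.rTensor D ((φ.rTensor D ∘ₗ ρN) n) = (e ∘ₗ φ).rTensor D (ρN n) := by
          rw [LinearMap.rTensor_comp]; rfl
      _ = φ₀.rTensor D (ρN n) := by rw [heφ']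
      _ = cofreeRightCoaction k D V (φ₀ n) := comodHom_apply k D hφ₀ n
      _ = cofreeRightCoaction k D V (e (φ n)) := by rw [heφ n]
      _ = e.rTensor D (ρL (φ n)) := (comodHom_apply k D heHom (φ n)).symm
      _ = e.rTensor D ((ρL ∘ₗ φ) n) := rfl
  have hψφ : dualizationMap k φ = ψ := by
    apply LinearMap.ext
    intro η
    obtain ⟨q, hq⟩ := Submodule.exists_isCompl (LinearMap.range e)
    set pr := (LinearMap.range e).linearProjOfIsCompl q hq with hpr
    set ξ : V ⊗[k] D →ₗ[k] k := (η ∘ₗ E.symm.toLinearMap) ∘ₗ pr with hξdef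
    have hξ : ξ ∘ₗ e = η := by
      apply LinearMap.ext
      intro x
      have h10 : (↑(E x) : V ⊗[k] D) = e x := LinearEquiv.ofInjective_apply e x
      have h11 : pr (e x) = E x := by
        rw [← h10]
        exact Submodule.linearProjOfIsCompl_apply_left hq (E x)
      calc ξ (e x) = η (E.symm (pr (e x))) := rfl
        _ = η (E.symm (E x)) := by rw [h11]
        _ = η x := by rw [E.symm_apply_apply]
    calc dualizationMap k φ η = (ξ ∘ₗ e) ∘ₗ φ := by rw [hξ]; rfl
      _ = ξ ∘ₗ (e ∘ₗ φ) := by rw [LinearMap.comp_assoc]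
      _ = ξ ∘ₗ φ₀ := by rw [heφ']
      _ = ψ (ξ ∘ₗ e) := key ξ
      _ = ψ η := by rw [hξ]
  exact ⟨φ, hφHom, hψφ⟩

end MainLemma
/-- Proposition 1.8(b): for any right `D`-comodule `N` and any finitely copresented
right `D`-comodule `L`, the dualization functor `X ↦ X* = Hom_k(X, k)` and the
forgetful functor from left `D`-contramodules to left `D*`-modules induce
isomorphisms of Hom spaces
`Hom_{D^op}(N, L) ≅ Hom^D(L*, N*) ≅ Hom_{D*}(L*, N*)`:
(1) the dual of a comodule morphism is a contramodule morphism;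
(2) dualization is a bijection from comodule morphisms `N → L` onto contramodule
    morphisms `L* → N*`;
(3) a linear map `L* → N*` is a contramodule morphism if and only if it commutes with
    the underlying `D*`-actions, i.e. is a morphism of `D*`-modules. -/
theorem hom_dualization_bijections
    (k : Type) [Field k]
    (D : Type) [AddCommGroup D] [Module k D] [Coalgebra k D]
    (N : Type) [AddCommGroup N] [Module k N]
    (ρN : N →ₗ[k] N ⊗[k] D) (hN : IsRightComod k D ρN)
    (L : Type) [AddCommGroup L] [Module k L]
    (ρL : L →ₗ[k] L ⊗[k] D) (hL : IsRightComod k D ρL)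
    (hLcp : FinCopresRight k D ρL) :
    (∀ φ : N →ₗ[k] L, IsRightComodHom k D ρN ρL φ →
      IsContraHom k D (dualContraaction k D ρL) (dualContraaction k D ρN)
        (dualizationMap k φ)) ∧
    (∀ ψ : (L →ₗ[k] k) →ₗ[k] (N →ₗ[k] k),
      IsContraHom k D (dualContraaction k D ρL) (dualContraaction k D ρN) ψ →
        ∃! φ : N →ₗ[k] L, IsRightComodHom k D ρN ρL φ ∧ dualizationMap k φ = ψ) ∧
    (∀ ψ : (L →ₗ[k] k) →ₗ[k] (N →ₗ[k] k),
      IsContraHom k D (dualContraaction k D ρL) (dualContraaction k D ρN) ψ ↔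
        ∀ (f : D →ₗ[k] k) (p : L →ₗ[k] k),
          ψ (dAction k D (dualContraaction k D ρL) f p) =
            dAction k D (dualContraaction k D ρN) f (ψ p)) := by
  refine ⟨fun φ hφ => dual_is_contraHom k D ρN ρL φ hφ, ?_, ?_⟩
  · intro ψ hψ
    obtain ⟨φ, h1, h2⟩ := exists_dual_preimage k D ρN hN ρL hLcp ψ
      (contraHom_dAction k D _ _ ψ hψ)
    exact ⟨φ, ⟨h1, h2⟩, fun φ' ⟨h1', h2'⟩ => dualizationMap_inj k (h2'.trans h2.symm)⟩
  · intro ψ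
    constructor
    · exact fun hψ => contraHom_dAction k D _ _ ψ hψ
    · intro Hd
      obtain ⟨φ, h1, h2⟩ := exists_dual_preimage k D ρN hN ρL hLcp ψ Hd
      rw [← h2]
      exact dual_is_contraHom k D ρN ρL φ h1
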